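/- (Dimension formula for transverse cones) For any face F of a convex polyhedral cone C in a Euclidean space, dim(C) = dim(F) + dim(t(C,F)). -/

import Mathlib

/-- The closed convex polyhedral cone generated by vectors `v 0, …, v (n-1)`. -/
def polyCone {V : Type*} [AddCommGroup V] [Module ℝ V] {n : ℕ} (v : Fin n → V) : Set V :=
  {x | ∃ c : Fin n → ℝ, (∀ i, 0 ≤ c i) ∧ x = ∑ i, c i • v i}

/-- `C` is a (closed convex) polyhedral cone. -/
def IsPolyCone {V : Type*} [AddCommGroup V] [Module ℝ V] (C : Set V) : Prop :=
  ∃ (n : ℕ) (v : Fin n → V), C = polyCone v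

/-- `F` is a face of the cone `C` (cut out by a supporting linear functional). -/
def IsFace {V : Type*} [AddCommGroup V] [Module ℝ V] (C F : Set V) : Prop :=
  ∃ ℓ : V →ₗ[ℝ] ℝ, (∀ x ∈ C, ℓ x ≤ 0) ∧ F = {x ∈ C | ℓ x = 0}

variable {V : Type*} [NormedAddCommGroup V] [InnerProductSpace ℝ V] [FiniteDimensional ℝ V]

/-- The transverse cone `t(C,F)`: the image of `C` under the orthogonal projection onto
the orthogonal complement of the linear span of `F`. -/
noncomputable def tCone (C F : Set V) : Set V :=
  (fun x => (Submodule.orthogonalProjectionOnto (Submodule.span ℝ F)ᗮ x : V)) '' C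

/-- dimension formula for transverse cones: for any face `F` of a convex
polyhedral cone `C`, `dim C = dim F + dim t(C,F)`. -/
theorem dim_tCone (C F : Set V) (hC : IsPolyCone C) (hF : IsFace C F) :
    Module.finrank ℝ (Submodule.span ℝ C) =
      Module.finrank ℝ (Submodule.span ℝ F) +
        Module.finrank ℝ (Submodule.span ℝ (tCone C F)) := by
  classical
  obtain ⟨ℓ, -, hFeq⟩ := hF
  have hFC : F ⊆ C := by rw [hFeq]; exact fun x hx => hx.1
  set W : Submodule ℝ V := Submodule.span ℝ F with hW
  set f : V →ₗ[ℝ] V := Wᗮ.subtype.comp (Submodule.orthogonalProjectionOnto Wᗮ).toLinearMap with hf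
  have hker : LinearMap.ker f = W := by
    rw [hf, LinearMap.ker_comp, Submodule.ker_subtype, Submodule.comap_bot]
    show (Submodule.orthogonalProjectionOnto Wᗮ).ker = W
    rw [Submodule.ker_orthogonalProjectionOnto, Submodule.orthogonal_orthogonal]
  have hspan : Submodule.span ℝ (tCone C F) = Submodule.map f (Submodule.span ℝ C) := by
    rw [← Submodule.span_image]
    rfl
  have hWle : W ≤ Submodule.span ℝ C :=
    Submodule.span_mono hFC
  set g : (Submodule.span ℝ C) →ₗ[ℝ] V := f.comp (Submodule.span ℝ C).subtype with hg
  have hrange : LinearMap.range g = Submodule.map f (Submodule.span ℝ C) := by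
    rw [hg, LinearMap.range_comp, Submodule.range_subtype]
  have hkerg : LinearMap.ker g = Submodule.comap (Submodule.span ℝ C).subtype W := by
    rw [hg, LinearMap.ker_comp, hker]
  have h1 : Module.finrank ℝ (LinearMap.ker g) = Module.finrank ℝ W := by
    rw [hkerg]
    exact (Submodule.comapSubtypeEquivOfLe hWle).finrank_eq
  have h2 := LinearMap.finrank_range_add_finrank_ker g
  rw [hrange, ← hspan, h1] at h2
  omega
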